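/- arXiv:1501.00185 — 2 statements merged into one kernel-verified Lean document; each statement's English description precedes it below -/
import Mathlib

section
/- Let k be a field of characteristic p > 0 and A = k[x_e : e ∈ ℕ]/(x_e^p − x_e). Then the maximal ideals of A are in canonical bijection with the p-adic integers ℤ_p: to α = Σ_{e≥0} α_e p^e (with digits α_e ∈ {0,…,p−1}) one associates the kernel of the k-algebra map sending x_e to the image of α_e in k, and every maximal ideal arises this way from a unique α. -/
/-- The `e`-th digit of the `p`-adic integer `α`, i.e. the coefficient `α_e ∈ {0, …, p-1}`
in the expansion `α = Σ_e α_e p^e`, extracted from the approximation `α.appr (e+1)`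
of `α` modulo `p^(e+1)`. -/
noncomputable def padicDigit {p : ℕ} [Fact p.Prime] (α : ℤ_[p]) (e : ℕ) : ℕ :=
  α.appr (e + 1) / p ^ e

section PadicAux

variable {p : ℕ} [Fact p.Prime]

private lemma pprime : p.Prime := Fact.out

private lemma ppow_neg_eq (n : ℕ) : (p : ℝ) ^ (-n : ℤ) = ((p : ℝ)⁻¹) ^ n := by
  rw [zpow_neg, ← inv_zpow, zpow_natCast]

lemma appr_zero' (α : ℤ_[p]) : α.appr 0 = 0 := by
  have := α.appr_lt 0
  simpa using Nat.lt_one_iff.mp (by simpa using this)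

lemma appr_succ' (α : ℤ_[p]) (e : ℕ) :
    α.appr (e + 1) = α.appr e + padicDigit α e * p ^ e := by
  obtain ⟨m, hm⟩ := α.dvd_appr_sub_appr e (e + 1) (Nat.le_succ e)
  have hle : α.appr e ≤ α.appr (e + 1) := α.appr_mono (Nat.le_succ e)
  have h1 : α.appr (e + 1) = α.appr e + p ^ e * m := by omega
  have hlt : α.appr e < p ^ e := α.appr_lt e
  have hpe : 0 < p ^ e := pow_pos (pprime (p := p)).pos e
  have hd : padicDigit α e = m := by
    rw [padicDigit, h1, mul_comm (p ^ e) m, Nat.add_mul_div_right _ _ hpe,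
      Nat.div_eq_of_lt hlt, zero_add]
  rw [hd, h1, mul_comm]

lemma padicDigit_lt (α : ℤ_[p]) (e : ℕ) : padicDigit α e < p := by
  have h := α.appr_lt (e + 1)
  have hpe : 0 < p ^ e := pow_pos (pprime (p := p)).pos e
  rw [padicDigit, Nat.div_lt_iff_lt_mul hpe]
  calc α.appr (e + 1) < p ^ (e + 1) := h
    _ = p * p ^ e := by ring

lemma appr_eq_sum' (α : ℤ_[p]) (n : ℕ) :
    α.appr n = ∑ e ∈ Finset.range n, padicDigit α e * p ^ e := by
  induction n with
  | zero => simpa using appr_zero' α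
  | succ n ih => rw [Finset.sum_range_succ, ← ih, appr_succ']

lemma padic_ext {α β : ℤ_[p]} (h : ∀ e, padicDigit α e = padicDigit β e) : α = β := by
  have happr : ∀ n, α.appr n = β.appr n := fun n => by
    rw [appr_eq_sum', appr_eq_sum']
    exact Finset.sum_congr rfl fun e _ => by rw [h]
  have key : ∀ n : ℕ, ‖α - β‖ ≤ ((p : ℝ)⁻¹) ^ n := by
    intro n
    have h1 := α.appr_spec n
    have h2 := β.appr_spec n
    rw [happr n] at h1
    have hmem : α - β ∈ Ideal.span {(p : ℤ_[p]) ^ n} := by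
      have h3 := Ideal.sub_mem _ h1 h2
      have heq : α - (β.appr n : ℤ_[p]) - (β - (β.appr n : ℤ_[p])) = α - β := by ring
      rwa [heq] at h3
    have h4 := (PadicInt.norm_le_pow_iff_mem_span_pow (α - β) n).mpr hmem
    rwa [ppow_neg_eq] at h4
  have hp1 : (p : ℝ)⁻¹ < 1 := by
    rw [inv_lt_one_iff₀]
    right
    exact_mod_cast (pprime (p := p)).one_lt
  have h0 : (0:ℝ) ≤ (p : ℝ)⁻¹ := by positivity
  have htend : Filter.Tendsto (fun n : ℕ => ((p : ℝ)⁻¹) ^ n) Filter.atTop (nhds 0) :=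
    tendsto_pow_atTop_nhds_zero_of_lt_one h0 hp1
  have hle : ‖α - β‖ ≤ 0 := ge_of_tendsto' htend key
  have hz : α - β = 0 := norm_eq_zero.mp (le_antisymm hle (norm_nonneg _))
  exact sub_eq_zero.mp hz

lemma sum_digits_lt (c : ℕ → ℕ) (hc : ∀ e, c e < p) (n : ℕ) :
    ∑ e ∈ Finset.range n, c e * p ^ e < p ^ n := by
  induction n with
  | zero => simp
  | succ n ih =>
    rw [Finset.sum_range_succ]
    have hp1 : 1 ≤ p := (pprime (p := p)).pos
    have hmul : c n * p ^ n ≤ (p - 1) * p ^ n :=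
      Nat.mul_le_mul_right _ (Nat.le_sub_one_of_lt (hc n))
    have hkey : p ^ n + (p - 1) * p ^ n = p ^ (n + 1) := by
      calc p ^ n + (p - 1) * p ^ n = ((p - 1) + 1) * p ^ n := by ring
        _ = p * p ^ n := by rw [Nat.sub_add_cancel hp1]
        _ = p ^ (n + 1) := by ring
    omega

lemma exists_padic_of_digits (c : ℕ → ℕ) (hc : ∀ e, c e < p) :
    ∃ α : ℤ_[p], ∀ e, padicDigit α e = c e := by
  classical
  set s : ℕ → ℤ_[p] := fun n => ∑ e ∈ Finset.range n, (c e : ℤ_[p]) * (p : ℤ_[p]) ^ e with hs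
  have hnorm_term : ∀ e, ‖(c e : ℤ_[p]) * (p : ℤ_[p]) ^ e‖ ≤ ((p : ℝ)⁻¹) ^ e := by
    intro e
    calc ‖(c e : ℤ_[p]) * (p : ℤ_[p]) ^ e‖ ≤ ‖(c e : ℤ_[p])‖ * ‖(p : ℤ_[p]) ^ e‖ :=
          norm_mul_le _ _
      _ ≤ 1 * ‖(p : ℤ_[p]) ^ e‖ :=
          mul_le_mul_of_nonneg_right (PadicInt.norm_le_one _) (norm_nonneg _)
      _ = (p : ℝ) ^ (-e : ℤ) := by rw [one_mul, PadicInt.norm_p_pow]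
      _ = ((p : ℝ)⁻¹) ^ e := ppow_neg_eq e
  have hcauchy : CauchySeq s := by
    apply cauchySeq_of_le_geometric ((p : ℝ)⁻¹) 1
    · rw [inv_lt_one_iff₀]; right; exact_mod_cast (pprime (p := p)).one_lt
    · intro n
      rw [dist_eq_norm]
      simp only [hs, Finset.sum_range_succ]
      rw [show (∑ e ∈ Finset.range n, (c e : ℤ_[p]) * (p : ℤ_[p]) ^ e) -
          ((∑ e ∈ Finset.range n, (c e : ℤ_[p]) * (p : ℤ_[p]) ^ e) +
            (c n : ℤ_[p]) * (p : ℤ_[p]) ^ n) = -((c n : ℤ_[p]) * (p : ℤ_[p]) ^ n) by ring,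
        norm_neg, one_mul]
      exact hnorm_term n
  obtain ⟨α, hα⟩ := cauchySeq_tendsto_of_complete hcauchy
  have hmem : ∀ n, α - s n ∈ Ideal.span {(p : ℤ_[p]) ^ n} := by
    intro n
    rw [← PadicInt.norm_le_pow_iff_mem_span_pow]
    have hsm : ∀ m, n ≤ m → ‖s m - s n‖ ≤ (p : ℝ) ^ (-n : ℤ) := by
      intro m hm
      have hsp : s m - s n ∈ Ideal.span {(p : ℤ_[p]) ^ n} := by
        simp only [hs]
        rw [show (∑ e ∈ Finset.range m, (c e : ℤ_[p]) * (p : ℤ_[p]) ^ e) -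
            ∑ e ∈ Finset.range n, (c e : ℤ_[p]) * (p : ℤ_[p]) ^ e =
            ∑ e ∈ Finset.Ico n m, (c e : ℤ_[p]) * (p : ℤ_[p]) ^ e from
          (Finset.sum_Ico_eq_sub _ hm).symm]
        apply Ideal.sum_mem
        intro e he
        rw [Finset.mem_Ico] at he
        rw [show (p : ℤ_[p]) ^ e = (p : ℤ_[p]) ^ n * (p : ℤ_[p]) ^ (e - n) by
          rw [← pow_add, Nat.add_sub_cancel' he.1]]
        rw [Ideal.mem_span_singleton]
        exact ⟨(c e : ℤ_[p]) * (p : ℤ_[p]) ^ (e - n), by ring⟩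
      exact (PadicInt.norm_le_pow_iff_mem_span_pow _ n).mpr hsp
    have htend2 : Filter.Tendsto (fun m => ‖s m - s n‖) Filter.atTop (nhds ‖α - s n‖) :=
      (hα.sub tendsto_const_nhds).norm
    exact le_of_tendsto htend2 (Filter.eventually_atTop.mpr ⟨n, hsm⟩)
  have hcast : ∀ n, (((∑ e ∈ Finset.range n, c e * p ^ e : ℕ)) : ℤ_[p]) = s n := by
    intro n
    simp only [hs]
    push_cast
    rfl
  have happr : ∀ n, α.appr n = ∑ e ∈ Finset.range n, c e * p ^ e := by
    intro n
    have h1 := α.appr_spec n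
    have h2 := hmem n
    rw [← hcast n] at h2
    have hdiff : ((α.appr n : ℤ_[p])) - ((∑ e ∈ Finset.range n, c e * p ^ e : ℕ) : ℤ_[p]) ∈
        Ideal.span {(p : ℤ_[p]) ^ n} := by
      have h3 := Ideal.sub_mem _ h2 h1
      have heq : α - ((∑ e ∈ Finset.range n, c e * p ^ e : ℕ) : ℤ_[p]) -
          (α - (α.appr n : ℤ_[p])) =
          ((α.appr n : ℤ_[p])) - ((∑ e ∈ Finset.range n, c e * p ^ e : ℕ) : ℤ_[p]) := by ring
      rwa [heq] at h3
    have hnorm : ‖(((α.appr n : ℤ) - ((∑ e ∈ Finset.range n, c e * p ^ e : ℕ) : ℤ) : ℤ) :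
        ℤ_[p])‖ ≤ (p : ℝ) ^ (-(n : ℤ)) := by
      rw [← PadicInt.norm_le_pow_iff_mem_span_pow] at hdiff
      convert hdiff using 2
      push_cast
      ring
    rw [PadicInt.norm_int_le_pow_iff_dvd] at hnorm
    have h3 : (α.appr n : ℤ) < (p : ℤ) ^ n := by exact_mod_cast α.appr_lt n
    have h4 : ((∑ e ∈ Finset.range n, c e * p ^ e : ℕ) : ℤ) < (p : ℤ) ^ n := by
      exact_mod_cast sum_digits_lt c hc n
    have h5 : (0 : ℤ) ≤ (α.appr n : ℤ) := Int.natCast_nonneg _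
    have h6 : (0 : ℤ) ≤ ((∑ e ∈ Finset.range n, c e * p ^ e : ℕ) : ℤ) := Int.natCast_nonneg _
    have hbound : |(α.appr n : ℤ) - ((∑ e ∈ Finset.range n, c e * p ^ e : ℕ) : ℤ)| <
        (p : ℤ) ^ n := by
      rw [abs_lt]
      constructor <;> linarith
    have hz := Int.eq_zero_of_abs_lt_dvd hnorm hbound
    have : (α.appr n : ℤ) = ((∑ e ∈ Finset.range n, c e * p ^ e : ℕ) : ℤ) := by linarith
    exact_mod_cast this
  refine ⟨α, fun e => ?_⟩
  have h1 := happr (e + 1)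
  rw [padicDigit, h1, Finset.sum_range_succ]
  have hpe : 0 < p ^ e := pow_pos (pprime (p := p)).pos e
  rw [Nat.add_mul_div_right _ _ hpe, Nat.div_eq_of_lt (sum_digits_lt c hc e), zero_add]

end PadicAux

section AlgAux

open MvPolynomial

variable {k : Type*} [CommRing k]

lemma sub_C_eval_mem (M : Ideal (MvPolynomial ℕ k)) (c : ℕ → k)
    (h : ∀ i, X i - C (c i) ∈ M) (f : MvPolynomial ℕ k) :
    f - C (eval c f) ∈ M := by
  induction f using MvPolynomial.induction_on with
  | C a => simp [M.zero_mem]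
  | add f g hf hg =>
    have := M.add_mem hf hg
    rw [map_add, map_add]
    convert this using 1
    ring
  | mul_X f i hf =>
    have key : f * X i - C (eval c (f * X i)) =
        f * (X i - C (c i)) + (f - C (eval c f)) * C (c i) := by
      rw [map_mul, eval_X, map_mul]
      ring
    rw [key]
    exact M.add_mem (M.mul_mem_left _ (h i)) (M.mul_mem_right _ hf)

lemma ker_aeval_le {k : Type*} [Field k] (M : Ideal (MvPolynomial ℕ k)) (c : ℕ → k)
    (h : ∀ i, X i - C (c i) ∈ M) :
    RingHom.ker (aeval (R := k) c).toRingHom ≤ M := by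
  intro f hf
  have hev : eval c f = 0 := by
    have : aeval (R := k) c f = 0 := hf
    rwa [aeval_def, Algebra.algebraMap_self, eval₂_id] at this
  have := sub_C_eval_mem M c h f
  rw [hev] at this
  simpa using this

lemma ker_aeval_isMaximal {k : Type*} [Field k] (c : ℕ → k) :
    (RingHom.ker (aeval (R := k) c).toRingHom).IsMaximal := by
  apply RingHom.ker_isMaximal_of_surjective
  intro z
  exact ⟨C z, by simp⟩

lemma mem_ker_aeval_iff {k : Type*} [Field k] (c : ℕ → k) (f : MvPolynomial ℕ k) :
    f ∈ RingHom.ker (aeval (R := k) c).toRingHom ↔ eval c f = 0 := by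
  rw [RingHom.mem_ker]
  constructor <;> intro h
  · have : aeval (R := k) c f = 0 := h
    rwa [aeval_def, Algebra.algebraMap_self, eval₂_id] at this
  · show aeval (R := k) c f = 0
    rwa [aeval_def, Algebra.algebraMap_self, eval₂_id]

end AlgAux

section FermatAux

variable {p : ℕ} [Fact p.Prime]

lemma natCast_pow_card {k : Type*} [CommRing k] [CharP k p] (n : ℕ) :
    ((n : k)) ^ p = (n : k) := by
  have h : ((n ^ p : ℕ) : ZMod p) = (n : ZMod p) := by
    push_cast
    exact ZMod.pow_card _
  have hmod : n ^ p ≡ n [MOD p] := (ZMod.natCast_eq_natCast_iff _ _ _).mp h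
  calc ((n : k)) ^ p = ((n ^ p : ℕ) : k) := by push_cast; ring
    _ = (n : k) := CharP.natCast_eq_natCast' k p hmod

lemma exists_digit_of_pow_eq {L : Type*} [Field L] [CharP L p] {t : L} (ht : t ^ p = t) :
    ∃ n : ℕ, n < p ∧ t = (n : L) := by
  classical
  by_contra hcon
  push_neg at hcon
  set f : Polynomial L := Polynomial.X ^ p - Polynomial.X with hf
  have hp1 : 1 < p := (Fact.out (p := p.Prime)).one_lt
  have hf0 : f ≠ 0 := FiniteField.X_pow_card_sub_X_ne_zero L hp1
  have hdeg : f.natDegree = p := FiniteField.X_pow_card_sub_X_natDegree_eq L hp1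
  have hroot : ∀ x : L, x ^ p = x → x ∈ f.roots := by
    intro x hx
    rw [Polynomial.mem_roots hf0]
    simp [hf, Polynomial.IsRoot, hx]
  set sN : Finset L := (Finset.range p).image (fun n : ℕ => (n : L)) with hsN
  have hsub : insert t sN ⊆ f.roots.toFinset := by
    intro x hx
    rw [Finset.mem_insert] at hx
    rw [Multiset.mem_toFinset]
    rcases hx with rfl | hx
    · exact hroot x ht
    · rw [hsN, Finset.mem_image] at hx
      obtain ⟨n, hn, rfl⟩ := hx
      exact hroot _ (natCast_pow_card n)
  have htn : t ∉ sN := by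
    intro hx
    rw [hsN, Finset.mem_image] at hx
    obtain ⟨n, hn, hxe⟩ := hx
    exact hcon n (Finset.mem_range.mp hn) hxe.symm
  have hcardsN : sN.card = p := by
    rw [hsN, Finset.card_image_of_injOn, Finset.card_range]
    intro a ha b hb hab
    exact CharP.natCast_injOn_Iio L p (Finset.mem_range.mp ha) (Finset.mem_range.mp hb) hab
  have hcard : p + 1 ≤ f.roots.toFinset.card := by
    have := Finset.card_le_card hsub
    rwa [Finset.card_insert_of_notMem htn, hcardsN] at this
  have hle : f.roots.toFinset.card ≤ p := by
    calc f.roots.toFinset.card ≤ Multiset.card f.roots := f.roots.toFinset_card_le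
      _ ≤ f.natDegree := f.card_roots'
      _ = p := hdeg
  omega

end FermatAux

set_option maxHeartbeats 1600000

/-- Let `k` be a field of characteristic `p > 0` and
`A = k[x_e : e ∈ ℕ] / (x_e ^ p - x_e)`.  The maximal ideals of `A` are in canonical
bijection with the `p`-adic integers: to `α = Σ_e α_e p^e` one associates the kernel of
the `k`-algebra map `A → k` sending `x_e` to the image of the digit `α_e` in `k`. -/
theorem maximalSpectrum_equiv_padicInt
    (p : ℕ) [Fact p.Prime] (k : Type*) [Field k] [CharP k p]
    (I : Ideal (MvPolynomial ℕ k))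
    (hI : I = Ideal.span (Set.range fun e : ℕ =>
      MvPolynomial.X e ^ p - MvPolynomial.X e)) :
    ∃ F : ℤ_[p] ≃ MaximalSpectrum (MvPolynomial ℕ k ⧸ I),
      ∀ α : ℤ_[p],
        (F α).asIdeal =
          Ideal.map (Ideal.Quotient.mk I)
            (RingHom.ker (MvPolynomial.aeval
              (fun e : ℕ => ((padicDigit α e : ℕ) : k)) :
                MvPolynomial ℕ k →ₐ[k] k).toRingHom) := by
  classical
  have hps : Function.Surjective (Ideal.Quotient.mk I) := Ideal.Quotient.mk_surjective
  set d : ℤ_[p] → ℕ → k := fun α e => ((padicDigit α e : ℕ) : k) with hd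
  set K : ℤ_[p] → Ideal (MvPolynomial ℕ k) :=
    fun α => RingHom.ker (MvPolynomial.aeval (R := k) (d α)).toRingHom with hK
  have hIK : ∀ α, I ≤ K α := by
    intro α
    rw [hI, Ideal.span_le]
    rintro _ ⟨e, rfl⟩
    rw [SetLike.mem_coe, hK, mem_ker_aeval_iff]
    simp only [map_sub, map_pow, MvPolynomial.eval_X]
    rw [hd]
    simp only []
    rw [natCast_pow_card, sub_self]
  have hKmax : ∀ α, (K α).IsMaximal := fun α => ker_aeval_isMaximal _
  have hmapmax : ∀ α, (Ideal.map (Ideal.Quotient.mk I) (K α)).IsMaximal := by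
    intro α
    apply Ideal.Quotient.maximal_of_isField
    haveI := hKmax α
    letI : Field (MvPolynomial ℕ k ⧸ K α) := Ideal.Quotient.field (K α)
    exact MulEquiv.isField (Field.toIsField (MvPolynomial ℕ k ⧸ K α))
      (DoubleQuot.quotQuotEquivQuotOfLE (hIK α)).toMulEquiv
  have hXmem : ∀ (α : ℤ_[p]) (e : ℕ), MvPolynomial.X e - MvPolynomial.C (d α e) ∈ K α := by
    intro α e
    rw [hK, mem_ker_aeval_iff]
    simp
  have hcomapK : ∀ α, Ideal.comap (Ideal.Quotient.mk I) (Ideal.map (Ideal.Quotient.mk I) (K α))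
      = K α := by
    intro α
    rw [Ideal.comap_map_of_surjective _ hps (K α), ← RingHom.ker_eq_comap_bot, Ideal.mk_ker]
    exact sup_eq_left.mpr (hIK α)
  have hinj : ∀ α β : ℤ_[p], Ideal.map (Ideal.Quotient.mk I) (K α) =
      Ideal.map (Ideal.Quotient.mk I) (K β) → α = β := by
    intro α β hmap
    have hKeq : K α = K β := by
      rw [← hcomapK α, ← hcomapK β, hmap]
    apply padic_ext
    intro e
    have hx := hXmem α e
    rw [hKeq, hK, mem_ker_aeval_iff, map_sub, MvPolynomial.eval_X, MvPolynomial.eval_C,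
      sub_eq_zero] at hx
    exact (CharP.natCast_injOn_Iio k p (padicDigit_lt β e) (padicDigit_lt α e) hx).symm
  have hsurj : ∀ M : Ideal (MvPolynomial ℕ k ⧸ I), M.IsMaximal →
      ∃ α : ℤ_[p], Ideal.map (Ideal.Quotient.mk I) (K α) = M := by
    intro M hM
    set M' : Ideal (MvPolynomial ℕ k) := Ideal.comap (Ideal.Quotient.mk I) M with hM'
    haveI hM'max : M'.IsMaximal := Ideal.comap_isMaximal_of_surjective _ hps
    have hIM' : I ≤ M' := by
      intro x hx
      show Ideal.Quotient.mk I x ∈ M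
      rw [Ideal.Quotient.eq_zero_iff_mem.mpr hx]
      exact M.zero_mem
    letI : Field (MvPolynomial ℕ k ⧸ M') := Ideal.Quotient.field M'
    haveI : CharP (MvPolynomial ℕ k ⧸ M') p := by
      apply charP_of_injective_ringHom
        (f := ((Ideal.Quotient.mk M').comp (MvPolynomial.C : k →+* MvPolynomial ℕ k)))
      exact RingHom.injective _
    have ht : ∀ e : ℕ, ∃ n : ℕ, n < p ∧
        Ideal.Quotient.mk M' (MvPolynomial.X e) = (n : MvPolynomial ℕ k ⧸ M') := by
      intro e
      have hpow : (Ideal.Quotient.mk M' (MvPolynomial.X e)) ^ p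
          = Ideal.Quotient.mk M' (MvPolynomial.X e) := by
        rw [← map_pow, ← sub_eq_zero, ← map_sub, Ideal.Quotient.eq_zero_iff_mem]
        exact hIM' (by rw [hI]; exact Ideal.subset_span ⟨e, rfl⟩)
      exact exists_digit_of_pow_eq hpow
    choose c hclt hceq using ht
    have hXc : ∀ e, MvPolynomial.X e - MvPolynomial.C ((c e : ℕ) : k) ∈ M' := by
      intro e
      rw [← Ideal.Quotient.eq_zero_iff_mem, map_sub, hceq e]
      have h1 : MvPolynomial.C ((c e : ℕ) : k) = ((c e : ℕ) : MvPolynomial ℕ k) :=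
        map_natCast (MvPolynomial.C : k →+* MvPolynomial ℕ k) (c e)
      rw [h1, map_natCast, sub_self]
    have hKeq : RingHom.ker (MvPolynomial.aeval (R := k)
        (fun e => ((c e : ℕ) : k))).toRingHom = M' :=
      (ker_aeval_isMaximal _).eq_of_le hM'max.ne_top (ker_aeval_le M' _ hXc)
    obtain ⟨α, hα⟩ := exists_padic_of_digits c hclt
    refine ⟨α, ?_⟩
    have hfun : d α = fun e => ((c e : ℕ) : k) := by
      funext e
      simp only [hd]
      rw [hα e]
    have hKα : K α = M' := by
      simp only [hK]
      rw [hfun]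
      exact hKeq
    rw [hKα, hM']
    exact Ideal.map_comap_of_surjective _ hps M
  let G : ℤ_[p] → MaximalSpectrum (MvPolynomial ℕ k ⧸ I) :=
    fun α => ⟨Ideal.map (Ideal.Quotient.mk I) (K α), hmapmax α⟩
  have hGbij : Function.Bijective G := by
    constructor
    · intro α β h
      exact hinj α β (congrArg MaximalSpectrum.asIdeal h)
    · rintro ⟨M, hM⟩
      obtain ⟨α, hα⟩ := hsurj M hM
      exact ⟨α, MaximalSpectrum.ext hα⟩
  exact ⟨Equiv.ofBijective G hGbij, fun α => rfl⟩
end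

section
/- Let p be a prime, s : ℕ_{≥1} → {0,…,p−1} a sequence, and Λ ⊆ (0,1] ∩ ℚ a finite set. Suppose that for all sufficiently large N there exists λ ∈ Λ whose base-p expansion begins with the reversed segment s(N), s(N−1), …, s(1) (i.e., λ = s(N)/p + s(N−1)/p² + ⋯ + s(1)/p^N + ⋯). Then there exists L ≥ 0 such that for all n ≥ L there exists μ ∈ Λ with denominator prime to p (μ ∈ ℤ_{(p)}) whose base-p expansion begins with s(n), s(n−1), …, s(1). -/
private lemma dig_summable {p : ℕ} (hp : 1 < p) (a : ℕ → ℕ) (ha : ∀ m, a m < p) :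
    Summable (fun m : ℕ => (a m : ℝ) / (p : ℝ) ^ (m + 1)) := by
  have hp0 : (0:ℝ) < p := by exact_mod_cast Nat.lt_of_lt_of_le Nat.zero_lt_one hp.le
  have hgeo : Summable (fun m : ℕ => ((p:ℝ)⁻¹) ^ m) :=
    summable_geometric_of_lt_one (by positivity) (by
      rw [inv_lt_one_iff₀]; right; exact_mod_cast hp)
  apply Summable.of_nonneg_of_le (fun m => by positivity) (fun m => ?_) hgeo
  have h1 : (a m : ℝ) ≤ (p : ℝ) := by exact_mod_cast (ha m).le
  have h2 : (a m : ℝ) / (p : ℝ) ^ (m + 1) ≤ (p:ℝ) / (p : ℝ) ^ (m + 1) := by gcongr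
  refine h2.trans (le_of_eq ?_)
  rw [pow_succ, inv_pow]
  field_simp

private lemma tail_bound {p : ℕ} (hp : 1 < p) (a b : ℕ → ℕ) (ha : ∀ m, a m < p)
    (hb : ∀ m, b m < p) (n : ℕ) (hab : ∀ m < n, a m = b m) :
    |(∑' m : ℕ, (a m : ℝ) / (p : ℝ) ^ (m + 1)) - ∑' m : ℕ, (b m : ℝ) / (p : ℝ) ^ (m + 1)|
      ≤ ((p : ℝ) ^ n)⁻¹ := by
  have hp0 : (0:ℝ) < p := by exact_mod_cast Nat.lt_of_lt_of_le Nat.zero_lt_one hp.le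
  have hp1 : (1:ℝ) < p := by exact_mod_cast hp
  set c : ℕ → ℝ := fun m => (a m : ℝ) / (p : ℝ) ^ (m + 1) - (b m : ℝ) / (p : ℝ) ^ (m + 1)
    with hc
  have hsa := dig_summable hp a ha
  have hsb := dig_summable hp b hb
  have hsc : Summable c := hsa.sub hsb
  have hdiff : (∑' m : ℕ, (a m : ℝ) / (p : ℝ) ^ (m + 1))
      - ∑' m : ℕ, (b m : ℝ) / (p : ℝ) ^ (m + 1) = ∑' m, c m := (Summable.tsum_sub hsa hsb).symm
  rw [hdiff]
  have hcnorm : Summable (fun m => ‖c m‖) := hsc.abs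
  refine (norm_tsum_le_tsum_norm hcnorm).trans ?_
  -- split the norm sum at n
  have hsplit := Summable.sum_add_tsum_nat_add (f := fun m => ‖c m‖) n hcnorm
  have hzero : ∀ m ∈ Finset.range n, ‖c m‖ = 0 := by
    intro m hm
    simp only [hc, hab m (Finset.mem_range.mp hm), sub_self, norm_zero]
  rw [← hsplit, Finset.sum_eq_zero hzero, zero_add]
  -- bound the tail
  have hbound : ∀ m : ℕ, ‖c (m + n)‖ ≤ ((p:ℝ) - 1) * ((p:ℝ)⁻¹) ^ (n + 1) * ((p:ℝ)⁻¹) ^ m := by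
    intro m
    have key : ∀ x : ℕ, x < p → (x : ℝ) / (p : ℝ) ^ (m + n + 1)
        ≤ ((p:ℝ) - 1) * ((p:ℝ)⁻¹) ^ (n + 1) * ((p:ℝ)⁻¹) ^ m := by
      intro x hx
      have hx' : (x : ℝ) ≤ (p : ℝ) - 1 := by
        have : (x:ℝ) + 1 ≤ p := by exact_mod_cast hx
        linarith
      have : (x : ℝ) / (p : ℝ) ^ (m + n + 1) ≤ ((p:ℝ) - 1) / (p : ℝ) ^ (m + n + 1) := by
        gcongr
      refine this.trans (le_of_eq ?_)
      rw [inv_pow, inv_pow, div_eq_mul_inv, mul_assoc, ← mul_inv, ← pow_add]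
      ring_nf
    rw [Real.norm_eq_abs, abs_sub_le_iff]
    constructor
    · have := key (a (m + n)) (ha _)
      have hb0 : (0:ℝ) ≤ (b (m+n) : ℝ) / (p : ℝ) ^ (m + n + 1) := by positivity
      linarith
    · have := key (b (m + n)) (hb _)
      have ha0 : (0:ℝ) ≤ (a (m+n) : ℝ) / (p : ℝ) ^ (m + n + 1) := by positivity
      linarith
  have hgeo : Summable (fun m : ℕ => ((p:ℝ) - 1) * ((p:ℝ)⁻¹) ^ (n + 1) * ((p:ℝ)⁻¹) ^ m) := by
    apply Summable.mul_left
    exact summable_geometric_of_lt_one (by positivity) (by rw [inv_lt_one_iff₀]; right; exact hp1)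
  have htail : Summable (fun m => ‖c (m + n)‖) := by
    exact (summable_nat_add_iff n).mpr hcnorm
  refine (Summable.tsum_le_tsum hbound htail hgeo).trans (le_of_eq ?_)
  rw [tsum_mul_left, tsum_geometric_of_lt_one (by positivity)
    (by rw [inv_lt_one_iff₀]; right; exact hp1)]
  have hpne : (p:ℝ) ≠ 0 := ne_of_gt hp0
  have hp1ne : (p:ℝ) - 1 ≠ 0 := by linarith
  have h1p : (1:ℝ) - (p:ℝ)⁻¹ = ((p:ℝ) - 1) / p := by field_simp
  rw [h1p, inv_div, inv_pow]
  field_simp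
  ring

private lemma shift_tsum {p : ℕ} (hp : 1 < p) (b : ℕ → ℕ) (hb : ∀ m, b m < p) (E : ℕ) :
    (p : ℝ) ^ E * (∑' m : ℕ, (b m : ℝ) / (p : ℝ) ^ (m + 1))
      - (∑ m ∈ Finset.range E, (b m : ℝ) * (p : ℝ) ^ (E - 1 - m))
      = ∑' m : ℕ, (b (m + E) : ℝ) / (p : ℝ) ^ (m + 1) := by
  have hp0 : (0:ℝ) < p := by exact_mod_cast Nat.lt_of_lt_of_le Nat.zero_lt_one hp.le
  have hsb := dig_summable hp b hb
  have hsg : Summable (fun m : ℕ => (p:ℝ) ^ E * ((b m : ℝ) / (p : ℝ) ^ (m + 1))) :=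
    hsb.mul_left _
  have hsplit := Summable.sum_add_tsum_nat_add
    (f := fun m : ℕ => (p:ℝ) ^ E * ((b m : ℝ) / (p : ℝ) ^ (m + 1))) E hsg
  have h1 : (p : ℝ) ^ E * (∑' m : ℕ, (b m : ℝ) / (p : ℝ) ^ (m + 1))
      = ∑' m : ℕ, (p:ℝ) ^ E * ((b m : ℝ) / (p : ℝ) ^ (m + 1)) := by
    rw [tsum_mul_left]
  rw [h1, ← hsplit]
  have h2 : ∀ m ∈ Finset.range E, (p:ℝ) ^ E * ((b m : ℝ) / (p : ℝ) ^ (m + 1))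
      = (b m : ℝ) * (p : ℝ) ^ (E - 1 - m) := by
    intro m hm
    have hmE : m < E := Finset.mem_range.mp hm
    have hE : (E - 1 - m) + (m + 1) = E := by omega
    rw [← hE, pow_add]
    have hE2 : E - 1 - m + (m + 1) - 1 - m = E - 1 - m := by omega
    rw [hE2]
    field_simp
  rw [Finset.sum_congr rfl h2]
  have h3 : ∀ m : ℕ, (p:ℝ) ^ E * ((b (m + E) : ℝ) / (p : ℝ) ^ (m + E + 1))
      = (b (m + E) : ℝ) / (p : ℝ) ^ (m + 1) := by
    intro m
    have : m + E + 1 = (m + 1) + E := by omega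
    rw [this, pow_add]
    field_simp
  rw [tsum_congr h3]
  ring

private lemma rat_dist {x y : ℚ} (h : x ≠ y) :
    (1 : ℝ) / ((x.den : ℝ) * (y.den : ℝ)) ≤ |(x : ℝ) - (y : ℝ)| := by
  set q : ℚ := x - y with hq
  have hq0 : q ≠ 0 := sub_ne_zero.mpr h
  have hnum : (1:ℝ) ≤ |(q.num : ℝ)| := by
    have : q.num ≠ 0 := Rat.num_ne_zero.mpr hq0
    have : (1:ℤ) ≤ |q.num| := Int.one_le_abs (by simpa using this)
    calc (1:ℝ) ≤ ((|q.num| : ℤ) : ℝ) := by exact_mod_cast this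
    _ = |(q.num : ℝ)| := by push_cast; ring
  have hdvd : q.den ∣ x.den * y.den := by
    have := Rat.add_den_dvd x (-y)
    simpa [hq, sub_eq_add_neg] using this
  have hden_le : (q.den : ℝ) ≤ (x.den : ℝ) * (y.den : ℝ) := by
    have := Nat.le_of_dvd (by positivity) hdvd
    exact_mod_cast this
  have hxden : (0:ℝ) < x.den := by exact_mod_cast x.pos
  have hyden : (0:ℝ) < y.den := by exact_mod_cast y.pos
  have hqden : (0:ℝ) < q.den := by exact_mod_cast q.pos
  have hcast : (x : ℝ) - (y : ℝ) = (q : ℝ) := by push_cast [hq]; ring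
  rw [hcast]
  have hqval : (q : ℝ) = (q.num : ℝ) / (q.den : ℝ) := by
    rw [Rat.cast_def]
  rw [hqval, abs_div, abs_of_pos hqden]
  calc (1 : ℝ) / ((x.den : ℝ) * (y.den : ℝ)) ≤ 1 / (q.den : ℝ) := by
        apply one_div_le_one_div_of_le hqden hden_le
  _ ≤ |(q.num : ℝ)| / (q.den : ℝ) := by gcongr

private lemma jump_den {p : ℕ} (hp : p.Prime) (l : ℚ) (E : ℕ)
    (hE : l.den.factorization p ≤ E) (c : ℚ) (hc : c.den = 1) :
    ¬ p ∣ ((p:ℚ) ^ E * l - c).den := by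
  set e := l.den.factorization p with he
  set d := l.den / p ^ e with hd
  have hden0 : l.den ≠ 0 := l.den_nz
  have hdeq : p ^ e * d = l.den := Nat.ordProj_mul_ordCompl_eq_self l.den p
  have hpd : ¬ p ∣ d := Nat.not_dvd_ordCompl hp hden0
  have hd0 : d ≠ 0 := by
    intro h; rw [h, mul_zero] at hdeq; exact hden0 hdeq.symm
  -- p^E * l = (p^(E-e) * l.num) /. d
  have key : (p:ℚ) ^ E * l = Rat.divInt ((p:ℤ) ^ (E - e) * l.num) (d : ℤ) := by
    have h1 : (p:ℚ) ^ E = Rat.divInt ((p:ℤ)^E : ℤ) 1 := by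
      rw [← Rat.intCast_eq_divInt]; push_cast; ring
    have h2 : l = Rat.divInt l.num (l.den : ℤ) := (Rat.num_divInt_den l).symm
    rw [h1]
    conv_lhs => rw [h2]
    rw [Rat.divInt_mul_divInt, one_mul]
    have h3 : ((l.den : ℤ)) = (p:ℤ)^e * d := by exact_mod_cast hdeq.symm
    have h4 : ((p:ℤ)^E * l.num) = (p:ℤ)^e * ((p:ℤ)^(E-e) * l.num) := by
      rw [← mul_assoc, ← pow_add]
      congr 2
      omega
    rw [h3, h4, Rat.divInt_mul_left (pow_ne_zero _ (by exact_mod_cast hp.pos.ne'))]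
  intro hdvd
  have hdvd1 : p ∣ ((p:ℚ) ^ E * l).den := by
    have h5 : ((p:ℚ) ^ E * l - c).den ∣ ((p:ℚ) ^ E * l).den * (-c).den :=
      by simpa [sub_eq_add_neg] using Rat.add_den_dvd ((p:ℚ) ^ E * l) (-c)
    rw [Rat.neg_den, hc, mul_one] at h5
    exact dvd_trans hdvd h5
  have h6 : (((p:ℚ) ^ E * l).den : ℤ) ∣ (d : ℤ) := by
    rw [key]; exact Rat.den_dvd _ _
  have h7 : ((p:ℚ) ^ E * l).den ∣ d := by exact_mod_cast h6
  exact hpd (dvd_trans hdvd1 h7)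

/-- Let `p` be a prime, `s : ℕ_{≥1} → {0, …, p-1}` a sequence, and `Λ ⊆ (0,1] ∩ ℚ` a
finite set.  Each `λ ∈ Λ` has a unique base-`p` expansion with digits `dig λ`
(where `dig λ m` is the `(m+1)`-st digit) not eventually all zero.  Suppose that for all
sufficiently large `N` there exists `λ ∈ Λ` whose expansion begins with
`s(N), s(N-1), …, s(1)`.  Then there exists `L` such that for all `n ≥ L` there exists
`μ ∈ Λ` with denominator prime to `p` whose expansion begins with `s(n), …, s(1)`. -/
theorem eventually_starts_with_padically_integral_jump
    (p : ℕ) (hp : p.Prime) (s : ℕ → ℕ) (hs : ∀ n, s n < p)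
    (Λ : Finset ℚ) (hΛ : ∀ l ∈ Λ, 0 < l ∧ l ≤ 1)
    (dig : ℚ → ℕ → ℕ)
    (hdig : ∀ l ∈ Λ, (∀ m, dig l m < p) ∧ (∀ N : ℕ, ∃ m ≥ N, dig l m ≠ 0) ∧
      (l : ℝ) = ∑' m : ℕ, (dig l m : ℝ) / (p : ℝ) ^ (m + 1))
    (hstart : ∃ N₀ : ℕ, ∀ N ≥ N₀, ∃ l ∈ Λ, ∀ j < N, dig l j = s (N - j)) :
    ∃ L : ℕ, ∀ n ≥ L, ∃ μ ∈ Λ, ¬ (p : ℕ) ∣ μ.den ∧ ∀ j < n, dig μ j = s (n - j) := by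
  classical
  obtain ⟨N₀, hN⟩ := hstart
  have hp1 : 1 < p := hp.one_lt
  set E := Λ.sup (fun l => l.den.factorization p) with hE
  set c : ℚ → ℚ := fun l => ∑ m ∈ Finset.range E, (dig l m : ℚ) * (p:ℚ) ^ (E - 1 - m) with hc
  set t : ℚ → ℚ := fun l => (p:ℚ) ^ E * l - c l with ht
  have hcden : ∀ l : ℚ, (c l).den = 1 := by
    intro l
    have : c l = ((∑ m ∈ Finset.range E, dig l m * p ^ (E - 1 - m) : ℕ) : ℚ) := by
      simp only [hc]; push_cast; ring
    rw [this, Rat.den_natCast]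
  have htden : ∀ l ∈ Λ, ¬ p ∣ (t l).den := fun l hl =>
    jump_den hp l E (by rw [hE]; exact Finset.le_sup (f := fun l : ℚ => l.den.factorization p) hl) (c l) (hcden l)
  have htval : ∀ l ∈ Λ, ((t l : ℚ) : ℝ) = ∑' m : ℕ, (dig l (m + E) : ℝ) / (p:ℝ) ^ (m + 1) := by
    intro l hl
    obtain ⟨hdltp, -, hsum⟩ := hdig l hl
    have h0 : ((t l : ℚ) : ℝ) = (p:ℝ) ^ E * ((l : ℚ) : ℝ)
        - ∑ m ∈ Finset.range E, (dig l m : ℝ) * (p:ℝ) ^ (E - 1 - m) := by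
      simp only [ht, hc]; push_cast; ring
    rw [h0, hsum]
    exact shift_tsum hp1 (dig l) hdltp E
  set F : Finset ℚ := Λ ∪ Λ.image t with hF
  set D := F.sup (fun q => q.den) with hD
  refine ⟨max N₀ (D * D + 1), fun n hn => ?_⟩
  have hnN : n ≥ N₀ := le_trans (le_max_left _ _) hn
  have hnD : D * D < n := by have := le_trans (le_max_right _ _) hn; omega
  obtain ⟨μ, hμΛ, hμ⟩ := hN n hnN
  obtain ⟨l', hl'Λ, hl'⟩ := hN (n + E) (by omega)
  refine ⟨μ, hμΛ, ?_, hμ⟩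
  suffices hts : μ = t l' by rw [hts]; exact htden l' hl'Λ
  by_contra hne
  obtain ⟨hμp, -, hμsum⟩ := hdig μ hμΛ
  obtain ⟨hl'p, -, -⟩ := hdig l' hl'Λ
  have hmatch : ∀ m < n, dig μ m = (fun m => dig l' (m + E)) m := by
    intro m hm
    have h1 := hμ m hm
    have h2 := hl' (m + E) (by omega)
    simp only []
    rw [h1, h2]
    congr 1
    omega
  have hclose := tail_bound hp1 (dig μ) (fun m => dig l' (m + E)) hμp (fun m => hl'p _) n hmatch
  rw [← hμsum, ← htval l' hl'Λ] at hclose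
  have hfar := rat_dist hne
  have hμD : μ.den ≤ D := Finset.le_sup (by simp [hF, hμΛ])
  have htD : (t l').den ≤ D := Finset.le_sup (by
    simp only [hF, Finset.mem_union, Finset.mem_image]
    exact Or.inr ⟨l', hl'Λ, rfl⟩)
  have hμden0 : 0 < μ.den := μ.pos
  have htden0 : 0 < (t l').den := (t l').pos
  have hpn : D * D < p ^ n :=
    lt_of_lt_of_le (lt_of_lt_of_le hnD (Nat.lt_two_pow_self (n := n)).le) (Nat.pow_le_pow_left hp.two_le n)
  have h1 : (1:ℝ) / ((D:ℝ) * (D:ℝ)) ≤ 1 / ((μ.den : ℝ) * ((t l').den : ℝ)) := by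
    apply one_div_le_one_div_of_le
    · positivity
    · exact_mod_cast Nat.mul_le_mul hμD htD
  have h2 : ((p:ℝ) ^ n)⁻¹ < 1 / ((D:ℝ) * (D:ℝ)) := by
    rw [inv_eq_one_div]
    apply one_div_lt_one_div_of_lt
    · have : 0 < D := lt_of_lt_of_le hμden0 hμD
      positivity
    · exact_mod_cast hpn
  linarith
end
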